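/- Suppose X'X + Δ'Δ = d·I_p with d ≥ γ₁, where γ₁ ≥ … ≥ γ_p ≥ 0 are the eigenvalues of X'X. Let λ₁ ≥ 0, λ₂ ≥ 0, let A = Δ'Δ = d·I_p − X'X with columns a₁, …, a_p, let x_j denote the j-th column of X, and define the elastic-net OEM iteration map M : ℝ^p → ℝ^p componentwise by M_j(β) = f(x_j'Y + a_j'β), where f(u) = sign(u)·((|u| − λ₁)₊/(d + λ₂)). Then for all β, φ ∈ ℝ^p, ‖M(β) − M(φ)‖ ≤ ((d − γ_p)/d)·‖β − φ‖. In particular, the global rate of convergence of the OEM sequence for the elastic-net (and for the lasso, the case λ₂ = 0) is at most R₀ = (d − γ_p)/d, the rate for the ordinary least squares OEM iteration. -/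

import Mathlib

open Filter Topology Matrix

theorem orth_sum_aux {p : ℕ} (V : Matrix (Fin p) (Fin p) ℝ) (h : Vᵀ * V = 1) (x : Fin p → ℝ) :
    ∑ j, (V.mulVec x j)^2 = ∑ j, (x j)^2 := by
  have h1 : (V *ᵥ x) ⬝ᵥ (V *ᵥ x) = x ⬝ᵥ x := by
    rw [Matrix.dotProduct_mulVec, ← Matrix.mulVec_transpose, Matrix.mulVec_mulVec, h,
      Matrix.one_mulVec]
  simpa [dotProduct, pow_two] using h1

theorem soft_eq_aux (lam u : ℝ) (hl : 0 ≤ lam) :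
    Real.sign u * max (|u| - lam) 0 = max (u - lam) 0 + min (u + lam) 0 := by
  rcases lt_trichotomy u 0 with h | h | h
  · rw [Real.sign_of_neg h, abs_of_neg h]
    rcases le_total (u + lam) 0 with h2 | h2
    · rw [max_eq_left (by linarith), min_eq_left h2, max_eq_right (by linarith)]; ring
    · rw [max_eq_right (by linarith), min_eq_right h2, max_eq_right (by linarith)]; ring
  · rw [h, Real.sign_zero, zero_mul, zero_sub, zero_add, max_eq_right (by linarith),
      min_eq_right hl, add_zero]
  · rw [Real.sign_of_pos h, abs_of_pos h, min_eq_right (by linarith), one_mul, add_zero]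

theorem soft_lip_aux (lam : ℝ) (hl : 0 ≤ lam) (u v : ℝ) :
    |(max (u - lam) 0 + min (u + lam) 0) - (max (v - lam) 0 + min (v + lam) 0)| ≤ |u - v| := by
  rcases le_total (u - lam) 0 with h1 | h1 <;> rcases le_total (u + lam) 0 with h2 | h2 <;>
    rcases le_total (v - lam) 0 with h3 | h3 <;> rcases le_total (v + lam) 0 with h4 | h4 <;>
    simp only [max_eq_left, max_eq_right, min_eq_left, min_eq_right, h1, h2, h3, h4] <;>
    rw [abs_le] <;>
    constructor <;> cases abs_cases (u - v) <;> linarith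

/-- Theorem 6, convergence rate for the elastic-net.
Suppose `XᵀX + ΔᵀΔ = d·I_p` with `d ≥ γ₁`, where `γ₁ ≥ … ≥ γ_p ≥ 0` are the
eigenvalues of `XᵀX` (given via an eigendecomposition `XᵀX = Vᵀ Γ V`).
Let `A = ΔᵀΔ = d·I_p − XᵀX` and define the elastic-net OEM map `M`
componentwise by `M_j(β) = f(x_jᵀY + a_jᵀβ)` with
`f(u) = sign(u)·(|u| − λ₁)₊/(d + λ₂)`.  Then `M` is Lipschitz with constant
`(d − γ_p)/d`, the rate `R₀` of the ordinary least squares OEM iteration. -/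
theorem stmt7 {n m p : ℕ} (hp : 0 < p)
    (X : Matrix (Fin n) (Fin p) ℝ) (Y : Fin n → ℝ) (Δ : Matrix (Fin m) (Fin p) ℝ)
    (d lam1 lam2 : ℝ) (hl1 : 0 ≤ lam1) (hl2 : 0 ≤ lam2)
    (V : Matrix (Fin p) (Fin p) ℝ) (γ : Fin p → ℝ)
    (hV : V ∈ Matrix.orthogonalGroup (Fin p) ℝ)
    (hmono : ∀ i j : Fin p, i ≤ j → γ j ≤ γ i) (hγ : ∀ j, 0 ≤ γ j)
    (hdecomp : Xᵀ * X = Vᵀ * Matrix.diagonal γ * V)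
    (hd : γ ⟨0, hp⟩ ≤ d)
    (hXΔ : Xᵀ * X + Δᵀ * Δ = d • (1 : Matrix (Fin p) (Fin p) ℝ))
    (M : EuclideanSpace ℝ (Fin p) → EuclideanSpace ℝ (Fin p))
    (hM : ∀ (β : EuclideanSpace ℝ (Fin p)) (j : Fin p),
      M β j = Real.sign (∑ i, X i j * Y i + ∑ i, (Δᵀ * Δ) i j * β i) *
        (max (|∑ i, X i j * Y i + ∑ i, (Δᵀ * Δ) i j * β i| - lam1) 0 / (d + lam2))) :
    ∀ β φ : EuclideanSpace ℝ (Fin p),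
      ‖M β - M φ‖ ≤ ((d - γ ⟨p - 1, by omega⟩) / d) * ‖β - φ‖ := by
  intro β φ
  set γL := γ ⟨p - 1, by omega⟩ with hγLdef
  have h2 : V * Vᵀ = 1 := by
    have := (Matrix.mem_orthogonalGroup_iff (Fin p) ℝ).mp hV; simpa using this
  have h1 : Vᵀ * V = 1 := by
    have := (Matrix.mem_orthogonalGroup_iff' (Fin p) ℝ).mp hV; simpa using this
  have hγL : ∀ j, γL ≤ γ j := fun j =>
    hmono j ⟨p - 1, by omega⟩ (by rw [Fin.le_def]; exact Nat.le_sub_one_of_lt j.2)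
  have hγ0 : ∀ j, γ j ≤ γ ⟨0, hp⟩ := fun j =>
    hmono ⟨0, hp⟩ j (by rw [Fin.le_def]; exact Nat.zero_le _)
  have hd0 : (0:ℝ) ≤ d := le_trans (hγ _) hd
  rcases hd0.eq_or_lt with hzero | hpos
  · -- degenerate case d = 0
    have hγzero : γ = 0 := by
      funext j; exact le_antisymm (le_trans (hγ0 j) (by rw [← hzero] at hd; exact hd)) (hγ j)
    have hXX : Xᵀ * X = 0 := by
      have hdg : Matrix.diagonal γ = 0 := by rw [hγzero]; exact Matrix.diagonal_zero
      rw [hdecomp, hdg, Matrix.mul_zero, Matrix.zero_mul]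
    have hA0 : Δᵀ * Δ = 0 := by
      have := hXΔ; rw [hXX, ← hzero, zero_smul, zero_add] at this; exact this
    have hMeq : M β = M φ := by
      ext j; rw [hM, hM]; simp [hA0]
    rw [hMeq, sub_self, norm_zero]
    have hγL0 : γL = 0 := by rw [hγLdef, hγzero]; rfl
    rw [hγL0, ← hzero]
    simp
  · -- main case d > 0
    have hdl : 0 < d + lam2 := by linarith
    set w : Fin p → ℝ := fun i => β i - φ i with hw
    set c : Fin p → ℝ := fun j => d - γ j with hc
    set A := Δᵀ * Δ with hAdef
    have hA : A = d • (1 : Matrix (Fin p) (Fin p) ℝ) - Xᵀ * X := by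
      rw [hAdef, eq_sub_iff_add_eq, add_comm]; exact hXΔ
    have hAsymm : Aᵀ = A := by
      rw [hAdef, Matrix.transpose_mul, Matrix.transpose_transpose]
    have hdiagc : Matrix.diagonal c = d • (1 : Matrix (Fin p) (Fin p) ℝ) - Matrix.diagonal γ := by
      ext i j
      by_cases hij : i = j <;>
        simp [Matrix.diagonal, Matrix.one_apply, hij, hc]
    have hAd : A = Vᵀ * Matrix.diagonal c * V := by
      rw [hdiagc, hA, hdecomp]
      rw [Matrix.mul_sub, Matrix.sub_mul, Matrix.mul_smul, Matrix.mul_one, Matrix.smul_mul, h1]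
    set z : Fin p → ℝ := fun j => ∑ i, A i j * w i with hz
    have hzmv : z = A *ᵥ w := by
      funext j
      rw [hz]
      have : (A *ᵥ w) j = (Aᵀ *ᵥ w) j := by rw [hAsymm]
      rw [this]
      simp [Matrix.mulVec, dotProduct, Matrix.transpose_apply]
    -- key spectral bound
    have hsum : ∑ j, z j ^ 2 ≤ (d - γL)^2 * ∑ j, w j ^ 2 := by
      have hzv : z = Vᵀ *ᵥ (Matrix.diagonal c *ᵥ (V *ᵥ w)) := by
        rw [hzmv, hAd, Matrix.mulVec_mulVec, Matrix.mulVec_mulVec]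
      have e1 : ∑ j, z j ^ 2 = ∑ j, ((Matrix.diagonal c *ᵥ (V *ᵥ w)) j) ^ 2 := by
        rw [hzv]
        exact orth_sum_aux Vᵀ (by rw [Matrix.transpose_transpose]; exact h2) _
      have e2 : ∑ j, ((V *ᵥ w) j) ^ 2 = ∑ j, w j ^ 2 := orth_sum_aux V h1 w
      rw [e1]
      calc ∑ j, ((Matrix.diagonal c *ᵥ (V *ᵥ w)) j) ^ 2
          = ∑ j, (c j)^2 * ((V *ᵥ w) j)^2 := by
            apply Finset.sum_congr rfl
            intro j _
            rw [Matrix.mulVec_diagonal]; ring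
        _ ≤ ∑ j, (d - γL)^2 * ((V *ᵥ w) j)^2 := by
            apply Finset.sum_le_sum
            intro j _
            apply mul_le_mul_of_nonneg_right _ (sq_nonneg _)
            have hc1 : 0 ≤ c j := by have := hγ0 j; simp only [hc]; linarith
            have hc2 : c j ≤ d - γL := by have := hγL j; simp only [hc]; linarith
            nlinarith
        _ = (d - γL)^2 * ∑ j, w j ^ 2 := by rw [← Finset.mul_sum, e2]
    -- componentwise Lipschitz bound
    have hcomp : ∀ j, |M β j - M φ j| ≤ |z j| / (d + lam2) := by
      intro j
      rw [hM, hM]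
      set u1 := ∑ i, X i j * Y i + ∑ i, (Δᵀ * Δ) i j * β i with hu1
      set u2 := ∑ i, X i j * Y i + ∑ i, (Δᵀ * Δ) i j * φ i with hu2
      have hu12 : u1 - u2 = z j := by
        have e : z j = ∑ i, (A i j * β i - A i j * φ i) := by
          simp only [hz, hw]
          exact Finset.sum_congr rfl fun i _ => by ring
        rw [hu1, hu2, e, Finset.sum_sub_distrib]
        ring
      have key : Real.sign u1 * (max (|u1| - lam1) 0 / (d + lam2)) -
          Real.sign u2 * (max (|u2| - lam1) 0 / (d + lam2)) =
          ((max (u1 - lam1) 0 + min (u1 + lam1) 0) -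
           (max (u2 - lam1) 0 + min (u2 + lam1) 0)) / (d + lam2) := by
        rw [← soft_eq_aux lam1 u1 hl1, ← soft_eq_aux lam1 u2 hl1]
        field_simp
      rw [key, abs_div, abs_of_pos hdl, div_le_div_iff₀ hdl hdl]
      have hlip := soft_lip_aux lam1 hl1 u1 u2
      rw [hu12] at hlip
      exact mul_le_mul_of_nonneg_right hlip hdl.le
    -- assemble
    have hnorm1 : ‖M β - M φ‖ = Real.sqrt (∑ j, (M β j - M φ j)^2) := by
      rw [EuclideanSpace.norm_eq]
      simp [Real.norm_eq_abs, sq_abs]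
    have hnorm2 : ‖β - φ‖ = Real.sqrt (∑ j, w j ^ 2) := by
      rw [EuclideanSpace.norm_eq]
      simp [Real.norm_eq_abs, sq_abs, hw]
    have hK : 0 ≤ (d - γL) / d := by
      apply div_nonneg _ hd0
      have := hγL ⟨0, hp⟩; linarith [hd]
    have hchain : ∑ j, (M β j - M φ j)^2 ≤ ((d - γL)/d)^2 * ∑ j, w j ^ 2 := by
      calc ∑ j, (M β j - M φ j)^2
          ≤ ∑ j, (|z j| / (d + lam2))^2 := by
            apply Finset.sum_le_sum
            intro j _
            rw [← sq_abs (M β j - M φ j)]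
            apply pow_le_pow_left₀ (abs_nonneg _) (hcomp j)
        _ = (1/(d + lam2)^2) * ∑ j, z j ^ 2 := by
            rw [Finset.mul_sum]
            apply Finset.sum_congr rfl
            intro j _
            rw [div_pow, sq_abs]
            ring
        _ ≤ (1/(d + lam2)^2) * ((d - γL)^2 * ∑ j, w j ^ 2) := by
            apply mul_le_mul_of_nonneg_left hsum
            positivity
        _ ≤ ((d - γL)/d)^2 * ∑ j, w j ^ 2 := by
            have hfrac : (d - γL)^2 / (d + lam2)^2 ≤ (d - γL)^2 / d^2 := by
              gcongr (d - γL)^2 / ?_ <;> first | positivity | nlinarith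
            have hS : (0:ℝ) ≤ ∑ j, w j ^ 2 := Finset.sum_nonneg fun j _ => sq_nonneg _
            calc (1/(d + lam2)^2) * ((d - γL)^2 * ∑ j, w j ^ 2)
                = ((d - γL)^2 / (d + lam2)^2) * ∑ j, w j ^ 2 := by ring
              _ ≤ ((d - γL)^2 / d^2) * ∑ j, w j ^ 2 :=
                  mul_le_mul_of_nonneg_right hfrac hS
              _ = ((d - γL)/d)^2 * ∑ j, w j ^ 2 := by rw [div_pow]
    rw [hnorm1, hnorm2]
    calc Real.sqrt (∑ j, (M β j - M φ j)^2)
        ≤ Real.sqrt (((d - γL)/d)^2 * ∑ j, w j ^ 2) := Real.sqrt_le_sqrt hchain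
      _ = (d - γL)/d * Real.sqrt (∑ j, w j ^ 2) := by
          rw [Real.sqrt_mul (sq_nonneg _), Real.sqrt_sq hK]
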